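/- An ideal I on ℕ is tall if and only if for every x ∈ ℓ∞ \ c_0 there exists y ∈ c_{0,I} \ c_0 with 0 < |y| ≤ |x| pointwise. -/

import Mathlib

open BoundedContinuousFunction Filter Topology

/-- An ideal `I` on `ℕ` is tall iff for every `x ∈ ℓ∞ \ c_0` there is
`y ∈ c_{0,I} \ c_0` with `0 < |y| ≤ |x|` pointwise. -/
theorem tall_iff_order_dense (I : Set (Set ℕ))
    (hdown : ∀ {A B : Set ℕ}, A ⊆ B → B ∈ I → A ∈ I)
    (hunion : ∀ {A B : Set ℕ}, A ∈ I → B ∈ I → A ∪ B ∈ I)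
    (hfin : ∀ A : Set ℕ, A.Finite → A ∈ I) :
    (∀ A : Set ℕ, A.Infinite → ∃ B ⊆ A, B.Infinite ∧ B ∈ I) ↔
    (∀ x : ℕ →ᵇ ℝ, ¬ Tendsto (fun n => x n) atTop (𝓝 0) →
      ∃ y : ℕ →ᵇ ℝ, (∀ ε > (0 : ℝ), {n | ε ≤ |y n|} ∈ I) ∧
        ¬ Tendsto (fun n => y n) atTop (𝓝 0) ∧ y ≠ 0 ∧ ∀ n, |y n| ≤ |x n|) := by
  classical
  constructor
  · intro htall x hx
    rw [NormedAddCommGroup.tendsto_nhds_zero] at hx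
    push_neg at hx
    obtain ⟨ε, hε, hfreq⟩ := hx
    have hA : {n : ℕ | ε ≤ |x n|}.Infinite := by
      rw [← Nat.frequently_atTop_iff_infinite]
      simpa [Real.norm_eq_abs, not_lt] using hfreq
    obtain ⟨B, hBA, hBinf, hBI⟩ := htall _ hA
    set f : ℕ → ℝ := fun n => if n ∈ B then x n else 0 with hf
    have hbd : ∀ n, ‖f n‖ ≤ ‖x‖ := by
      intro n
      simp only [hf]
      split
      · exact x.norm_coe_le_norm n
      · simpa using norm_nonneg x
    set y : ℕ →ᵇ ℝ :=
      BoundedContinuousFunction.ofNormedAddCommGroup f continuous_of_discreteTopology ‖x‖ hbd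
      with hy
    have hyval : ∀ n, y n = if n ∈ B then x n else 0 := fun n => rfl
    have habs : ∀ n, |y n| ≤ |x n| := by
      intro n
      rw [hyval n]
      split
      · exact le_rfl
      · simp [abs_nonneg]
    refine ⟨y, ?_, ?_, ?_, habs⟩
    · intro ε' hε'
      refine hdown (fun n hn => ?_) hBI
      by_contra hnB
      have : y n = 0 := by simp [hyval n, hnB]
      rw [Set.mem_setOf_eq, this] at hn
      simp at hn
      linarith
    · rw [NormedAddCommGroup.tendsto_nhds_zero]
      push_neg
      refine ⟨ε, hε, ?_⟩
      rw [Nat.frequently_atTop_iff_infinite]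
      refine hBinf.mono (fun n hn => ?_)
      have : ε ≤ |x n| := hBA hn
      simp only [Set.mem_setOf_eq, not_lt, Real.norm_eq_abs, hyval n, if_pos hn]
      exact this
    · obtain ⟨n, hn⟩ := hBinf.nonempty
      intro h0
      have : y n = 0 := by rw [h0]; rfl
      rw [hyval n, if_pos hn] at this
      have hεx : ε ≤ |x n| := hBA hn
      rw [this] at hεx
      simp at hεx
      linarith
  · intro h A hA
    set f : ℕ → ℝ := fun n => if n ∈ A then (1:ℝ) else 0 with hf
    have hbd : ∀ n, ‖f n‖ ≤ 1 := by
      intro n; simp only [hf]; split <;> simp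
    set x : ℕ →ᵇ ℝ :=
      BoundedContinuousFunction.ofNormedAddCommGroup f continuous_of_discreteTopology 1 hbd
      with hx
    have hxval : ∀ n, x n = if n ∈ A then (1:ℝ) else 0 := fun n => rfl
    have hxn : ¬ Tendsto (fun n => x n) atTop (𝓝 0) := by
      rw [NormedAddCommGroup.tendsto_nhds_zero]
      push_neg
      refine ⟨1, one_pos, ?_⟩
      rw [Nat.frequently_atTop_iff_infinite]
      refine hA.mono (fun n hn => ?_)
      simp [Real.norm_eq_abs, hxval n, if_pos hn]
    obtain ⟨y, hyI, hynot, -, hle⟩ := h x hxn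
    rw [NormedAddCommGroup.tendsto_nhds_zero] at hynot
    push_neg at hynot
    obtain ⟨ε, hε, hfreq⟩ := hynot
    rw [Nat.frequently_atTop_iff_infinite] at hfreq
    refine ⟨{n | ε ≤ |y n|}, ?_, ?_, hyI ε hε⟩
    · intro n hn
      by_contra hnA
      have h1 : |y n| ≤ |x n| := hle n
      rw [hxval n, if_neg hnA] at h1
      simp only [abs_zero] at h1
      have : ε ≤ |y n| := hn
      have : (0:ℝ) < |y n| := lt_of_lt_of_le hε this
      linarith
    · refine hfreq.mono (fun n hn => ?_)
      simp only [Set.mem_setOf_eq, not_lt, Real.norm_eq_abs] at hn ⊢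
      exact hn
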